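/- Let C be a category with a faithful functor Q : C ⥤ Set satisfying: for all objects A, B and every bijection u : Q(A) ≃ Q(B), there exists a unique object C' with Q(C') = Q(A) and an isomorphism u* : C' ≅ B with Q(u*) = u. Let π : C ⥤ C be an equivalence such that there is a family of bijections u_A : Q(A) ≃ Q(π(A)) natural in A (i.e., u_B ∘ Q(f) = Q(π(f)) ∘ u_A for all f : A ⟶ B). Then π is naturally isomorphic to an automorphism of C. -/

import Mathlib

open CategoryTheory
namespace Stmt10Aux

lemma eqToHom_apply' {X Y : Type _} (p : X = Y) (x : X) :
    eqToHom p x = cast p x := by subst p; rfl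

variable {C : Type*} [Category C] (Q : C ⥤ Type*)

variable (T : ∀ (A B : C), (Q.obj A ≃ Q.obj B) → C)
  (iT : ∀ (A B : C) (w : Q.obj A ≃ Q.obj B), T A B w ≅ B)

noncomputable def rect (ρ : C ⥤ C) (w : ∀ A : C, Q.obj A ≃ Q.obj (ρ.obj A)) : C ⥤ C where
  obj A := T A (ρ.obj A) (w A)
  map {A B} f := (iT _ _ _).hom ≫ ρ.map f ≫ (iT _ _ _).inv
  map_id A := by simp
  map_comp f g := by simp

variable (hT : ∀ A B w, Q.obj (T A B w) = Q.obj A)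
  (hiT : ∀ A B w, Q.map (iT A B w).hom = fun x => w (cast (hT A B w) x))

include hT hiT

lemma Q_iT_inv (A B : C) (w : Q.obj A ≃ Q.obj B) (y : Q.obj B) :
    Q.map (iT A B w).inv y = cast (hT A B w).symm (w.symm y) := by
  have h1 : Q.map (iT A B w).hom (cast (hT A B w).symm (w.symm y)) = y := by
    rw [hiT]; simp
  have h2 := ConcreteCategory.congr_hom (show Q.map (iT A B w).hom ≫ Q.map (iT A B w).inv = 𝟙 _ by
    rw [← Q.map_comp, Iso.hom_inv_id, Q.map_id]) (cast (hT A B w).symm (w.symm y))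
  simp only [types_comp_apply, types_id_apply, h1] at h2
  exact h2

lemma Q_rect_map (ρ : C ⥤ C) (w : ∀ A : C, Q.obj A ≃ Q.obj (ρ.obj A))
    (hw : ∀ (A B : C) (f : A ⟶ B) (x : Q.obj A),
      w B (Q.map f x) = Q.map (ρ.map f) (w A x))
    {A B : C} (f : A ⟶ B) (z : Q.obj ((rect Q T iT ρ w).obj A)) :
    Q.map ((rect Q T iT ρ w).map f) z
      = cast (hT B (ρ.obj B) (w B)).symm
          (Q.map f (cast (hT A (ρ.obj A) (w A)) z)) := by
  show Q.map ((iT _ _ _).hom ≫ ρ.map f ≫ (iT _ _ _).inv) z = _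
  rw [Q.map_comp, Q.map_comp]
  simp only [types_comp_apply]
  change Q.map (iT B (ρ.obj B) (w B)).inv (Q.map (ρ.map f) (Q.map (iT A (ρ.obj A) (w A)).hom z)) = _
  rw [hiT, ← hw, Q_iT_inv Q T iT hT hiT]
  simp

end Stmt10Aux

open Stmt10Aux in
theorem stmt_10 {C : Type*} [Category C] (Q : C ⥤ Type*) [Q.Faithful]
    (hstar : ∀ (A B : C) (u : Q.obj A ≃ Q.obj B),
      ∃! C' : C, ∃ (h : Q.obj C' = Q.obj A) (i : C' ≅ B),
        Q.map i.hom = fun x => u (cast h x))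
    (π : C ⥤ C) (hπ : π.IsEquivalence)
    (u : ∀ A : C, Q.obj A ≃ Q.obj (π.obj A))
    (hnat : ∀ (A B : C) (f : A ⟶ B) (x : Q.obj A),
      u B (Q.map f x) = Q.map (π.map f) (u A x)) :
    ∃ F : C ⥤ C, (∃ G : C ⥤ C, F ⋙ G = 𝟭 C ∧ G ⋙ F = 𝟭 C) ∧ Nonempty (π ≅ F) := by
  classical
  have hstar' : ∀ (A B : C) (w : Q.obj A ≃ Q.obj B),
      ∃ C' : C, (∃ (h : Q.obj C' = Q.obj A) (i : C' ≅ B),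
        Q.map i.hom = fun x => w (cast h x)) ∧
        ∀ y : C, (∃ (h : Q.obj y = Q.obj A) (i : y ≅ B),
          Q.map i.hom = fun x => w (cast h x)) → y = C' := fun A B w => hstar A B w
  choose T hprop using hstar'
  have uniq := fun A B w => (hprop A B w).2
  choose hT iT hiT using fun A B w => (hprop A B w).1
  haveI := hπ
  let e := π.asEquivalence
  let pinv := e.inverse
  let v : ∀ A : C, Q.obj A ≃ Q.obj (pinv.obj A) := fun A =>
    (Q.mapIso ((e.counitIso.app A).symm)).toEquiv.trans (u (pinv.obj A)).symm
  have hQv : ∀ (A : C) (x : Q.obj A),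
      v A x = (u (pinv.obj A)).symm (Q.map (e.counitIso.app A).inv x) := fun A x => rfl
  have hv : ∀ (A B : C) (f : A ⟶ B) (x : Q.obj A),
      v B (Q.map f x) = Q.map (pinv.map f) (v A x) := by
    intro A B f x
    have h0 : Q.map f ≫ Q.map (e.counitIso.app B).inv
        = Q.map (e.counitIso.app A).inv ≫ Q.map (π.map (pinv.map f)) := by
      exact (Q.map_comp _ _).symm.trans ((congrArg Q.map (e.counitIso.inv.naturality f)).trans (Q.map_comp _ _))
    have h2 := ConcreteCategory.congr_hom h0 x
    simp only [types_comp_apply] at h2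
    have key : ∀ y : Q.obj (π.obj (pinv.obj A)), (u (pinv.obj B)).symm (Q.map (π.map (pinv.map f)) y)
        = Q.map (pinv.map f) ((u (pinv.obj A)).symm y) := by
      intro y
      rw [Equiv.symm_apply_eq, hnat]; simp
    rw [hQv, hQv, h2]
    exact key _
  let F : C ⥤ C := rect Q T iT π u
  let G : C ⥤ C := rect Q T iT pinv v
  have hQF : ∀ {A B : C} (f : A ⟶ B) (z : Q.obj (F.obj A)),
      Q.map (F.map f) z = cast (hT B (π.obj B) (u B)).symm
        (Q.map f (cast (hT A (π.obj A) (u A)) z)) :=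
    fun f z => Q_rect_map Q T iT hT hiT π u hnat f z
  have hQG : ∀ {A B : C} (f : A ⟶ B) (z : Q.obj (G.obj A)),
      Q.map (G.map f) z = cast (hT B (pinv.obj B) (v B)).symm
        (Q.map f (cast (hT A (pinv.obj A) (v A)) z)) :=
    fun f z => Q_rect_map Q T iT hT hiT pinv v hv f z
  -- G ∘ F = id on objects
  have hGF_obj : ∀ A : C, G.obj (F.obj A) = A := by
    intro A
    refine (uniq (F.obj A) (pinv.obj (F.obj A)) (v (F.obj A)) A
      ⟨(hT A (π.obj A) (u A)).symm,
        e.unitIso.app A ≪≫ pinv.mapIso (iT A (π.obj A) (u A)).symm, ?_⟩).symm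
    funext x
    have htri : π.map (e.unitIso.hom.app A) = (e.counitIso.app (π.obj A)).inv :=
      (Iso.comp_hom_eq_id _).mp (e.functor_unitIso_comp A)
    have e2 : v (π.obj A) (u A x) = Q.map (e.unitIso.hom.app A) x := by
      have hn := hnat A (pinv.obj (π.obj A)) (e.unitIso.hom.app A) x
      erw [htri] at hn
      rw [hQv]; erw [← hn]
      simp
      rfl
    have key := hv (π.obj A) (F.obj A) (iT A (π.obj A) (u A)).inv (u A x)
    have e1 : Q.map (iT A (π.obj A) (u A)).inv (u A x)
        = cast (hT A (π.obj A) (u A)).symm x := by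
      rw [Q_iT_inv Q T iT hT hiT]; simp
    erw [e1, e2] at key
    show Q.map ((e.unitIso.hom.app A) ≫ pinv.map (iT A (π.obj A) (u A)).inv) x = _
    rw [FunctorToTypes.map_comp_apply]
    exact key.symm
  -- F ∘ G = id on objects
  have hFG_obj : ∀ A : C, F.obj (G.obj A) = A := by
    intro A
    refine (uniq (G.obj A) (π.obj (G.obj A)) (u (G.obj A)) A
      ⟨(hT A (pinv.obj A) (v A)).symm,
        (e.counitIso.app A).symm ≪≫ π.mapIso (iT A (pinv.obj A) (v A)).symm, ?_⟩).symm
    funext x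
    have key := hnat (pinv.obj A) (G.obj A) (iT A (pinv.obj A) (v A)).inv (v A x)
    have e1 : Q.map (iT A (pinv.obj A) (v A)).inv (v A x)
        = cast (hT A (pinv.obj A) (v A)).symm x := by
      rw [Q_iT_inv Q T iT hT hiT]; simp
    have e2 : u (pinv.obj A) (v A x) = Q.map (e.counitIso.app A).inv x := by
      rw [hQv]; exact Equiv.apply_symm_apply _ _
    erw [e1, e2] at key
    show Q.map ((e.counitIso.app A).inv ≫ π.map (iT A (pinv.obj A) (v A)).inv) x = _
    erw [FunctorToTypes.map_comp_apply]
    exact key.symm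
  have hFG : F ⋙ G = 𝟭 C := by
    refine CategoryTheory.Functor.ext hGF_obj ?_
    intro A B f
    apply Q.map_injective
    refine ConcreteCategory.hom_ext _ _ (fun z => ?_)
    have l1 : Q.map ((F ⋙ G).map f) z
        = cast (hT (F.obj B) (pinv.obj (F.obj B)) (v (F.obj B))).symm
            (cast (hT B (π.obj B) (u B)).symm
              (Q.map f (cast (hT A (π.obj A) (u A))
                (cast (hT (F.obj A) (pinv.obj (F.obj A)) (v (F.obj A))) z)))) := by
      show Q.map (G.map (F.map f)) z = _
      rw [hQG, hQF]; rfl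
    rw [l1, Q.map_comp, Q.map_comp]
    simp only [types_comp_apply, eqToHom_map, Stmt10Aux.eqToHom_apply']
    erw [cast_cast, cast_cast]
    rfl
  have hGF : G ⋙ F = 𝟭 C := by
    refine CategoryTheory.Functor.ext hFG_obj ?_
    intro A B f
    apply Q.map_injective
    refine ConcreteCategory.hom_ext _ _ (fun z => ?_)
    have l1 : Q.map ((G ⋙ F).map f) z
        = cast (hT (G.obj B) (π.obj (G.obj B)) (u (G.obj B))).symm
            (cast (hT B (pinv.obj B) (v B)).symm
              (Q.map f (cast (hT A (pinv.obj A) (v A))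
                (cast (hT (G.obj A) (π.obj (G.obj A)) (u (G.obj A))) z)))) := by
      show Q.map (F.map (G.map f)) z = _
      rw [hQF, hQG]; rfl
    rw [l1, Q.map_comp, Q.map_comp]
    simp only [types_comp_apply, eqToHom_map, Stmt10Aux.eqToHom_apply']
    erw [cast_cast, cast_cast]
    rfl
  refine ⟨F, ⟨G, hFG, hGF⟩, ⟨NatIso.ofComponents
    (fun A => (iT A (π.obj A) (u A)).symm) ?_⟩⟩
  intro A B f
  show π.map f ≫ (iT B (π.obj B) (u B)).inv
      = (iT A (π.obj A) (u A)).inv ≫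
        ((iT A (π.obj A) (u A)).hom ≫ π.map f ≫ (iT B (π.obj B) (u B)).inv)
  simp
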